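/- Let η_V > 0, η_S > 0, α ∈ [0,1], μ ∈ ℝ and ρ < 0 with η_V ≠ η_S |ρ|. Define for x ∈ ℝ and y ≥ 0 the joint density p^C(x,y) = η_V e^{-η_V y} · ( α η_S e^{-η_S (x - μ - ρ y)} 1_{x - μ - ρ y ≥ 0} + (1-α) η_S e^{η_S (x - μ - ρ y)} 1_{x - μ - ρ y < 0} ). Then for every x < μ, ∫₀^∞ p^C(x,y) dy = c_{1L} · (η_V/|ρ|) e^{(η_V/|ρ|) x} + c_{2L} · η_S e^{η_S x}, where c_{1L} = α (η_S |ρ| / (η_V + η_S |ρ|)) e^{-(η_V/|ρ|) μ} - (1-α) (η_S |ρ| / (η_V - η_S |ρ|)) e^{-(η_V/|ρ|) μ} and c_{2L} = (1-α) (η_V / (η_V - η_S |ρ|)) e^{-η_S μ}. -/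

import Mathlib

open MeasureTheory

open Real Set

lemma exp_Ioi' (c : ℝ) {b : ℝ} (hb : 0 < b) :
    ∫ y in Ioi c, Real.exp (-(b * y)) = Real.exp (-(b * c)) / b := by
  have := MeasureTheory.integral_comp_mul_left_Ioi (fun y => Real.exp (-y)) c hb
  simp only [smul_eq_mul] at this
  rw [this, integral_exp_neg_Ioi]; ring

lemma exp_ivl' (a b : ℝ) {k : ℝ} (hk : k ≠ 0) :
    ∫ y in a..b, Real.exp (k * y) = (Real.exp (k * b) - Real.exp (k * a)) / k := by
  have := intervalIntegral.integral_comp_mul_left (fun y => Real.exp y) hk (a := a) (b := b)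
  simp only [smul_eq_mul] at this
  rw [this, integral_exp]; ring

/-- The joint density of the common jumps in the Kou-type model. -/
noncomputable def pC (ηV ηS α μ ρ : ℝ) (x y : ℝ) : ℝ :=
  ηV * Real.exp (-ηV * y) *
    (if 0 ≤ x - μ - ρ * y then α * (ηS * Real.exp (-ηS * (x - μ - ρ * y)))
     else (1 - α) * (ηS * Real.exp (ηS * (x - μ - ρ * y))))

/-- Marginal density of the common asset jump in the Kou-type model on `{x < μ}`:
`∫₀^∞ p^C(x,y) dy = c_{1L} (η_V/|ρ|) e^{(η_V/|ρ|)x} + c_{2L} η_S e^{η_S x}`. -/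
theorem stmt_6 (ηV ηS α μ ρ : ℝ) (hηV : 0 < ηV) (hηS : 0 < ηS)
    (hα : α ∈ Set.Icc (0 : ℝ) 1) (hρ : ρ < 0) (hne : ηV ≠ ηS * |ρ|) :
    ∀ x : ℝ, x < μ →
      ∫ y in Set.Ioi (0 : ℝ), pC ηV ηS α μ ρ x y
        = (α * (ηS * |ρ| / (ηV + ηS * |ρ|)) * Real.exp (-(ηV / |ρ|) * μ)
            - (1 - α) * (ηS * |ρ| / (ηV - ηS * |ρ|)) * Real.exp (-(ηV / |ρ|) * μ))
            * (ηV / |ρ| * Real.exp (ηV / |ρ| * x))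
          + ((1 - α) * (ηV / (ηV - ηS * |ρ|)) * Real.exp (-ηS * μ))
            * (ηS * Real.exp (ηS * x)) := by
  intro x hx
  have habs : |ρ| = -ρ := abs_of_neg hρ
  rw [habs] at hne ⊢
  set r : ℝ := -ρ with hrdef
  have hr0 : 0 < r := by simp only [hrdef]; linarith
  set y₀ : ℝ := (μ - x) / r with hy₀
  have hy₀0 : 0 < y₀ := div_pos (by linarith) hr0
  have hpt : ρ * y₀ = x - μ := by
    rw [hy₀]; field_simp [hrdef]; ring
  set k : ℝ := ηS * r - ηV with hkdef
  have hk : k ≠ 0 := sub_ne_zero.2 (fun h => hne (h ▸ (mul_comm ηS r ▸ rfl)))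
  set b : ℝ := ηV + ηS * r with hbdef
  have hb0 : 0 < b := by positivity
  set c₁ : ℝ := (1 - α) * (ηV * ηS) * Real.exp (ηS * (x - μ)) with hc₁
  set c₂ : ℝ := α * (ηV * ηS) * Real.exp (-(ηS * (x - μ))) with hc₂
  have heq1 : ∀ y ∈ Ioo (0:ℝ) y₀, pC ηV ηS α μ ρ x y = c₁ * Real.exp (k * y) := by
    intro y hy
    have hcond : x - μ - ρ * y < 0 := by
      have : ρ * y > ρ * y₀ := (mul_lt_mul_left_of_neg hρ).2 hy.2
      rw [hpt] at this; linarith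
    have e : Real.exp (ηS * (x - μ)) * Real.exp (k * y)
        = Real.exp (-ηV * y) * Real.exp (ηS * (x - μ - ρ * y)) := by
      rw [← Real.exp_add, ← Real.exp_add]; congr 1
      simp only [hkdef, hrdef]; ring
    rw [pC, if_neg (not_le.2 hcond), hc₁]
    linear_combination ((1 - α) * (ηV * ηS)) * e.symm
  have heq2 : ∀ y ∈ Ioi y₀, pC ηV ηS α μ ρ x y = c₂ * Real.exp (-(b * y)) := by
    intro y hy
    have hcond : 0 ≤ x - μ - ρ * y := by
      have : ρ * y < ρ * y₀ := (mul_lt_mul_left_of_neg hρ).2 hy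
      rw [hpt] at this; linarith
    have e : Real.exp (-(ηS * (x - μ))) * Real.exp (-(b * y))
        = Real.exp (-ηV * y) * Real.exp (-ηS * (x - μ - ρ * y)) := by
      rw [← Real.exp_add, ← Real.exp_add]; congr 1
      simp only [hbdef, hrdef]; ring
    rw [pC, if_pos hcond, hc₂]
    linear_combination (α * (ηV * ηS)) * e.symm
  have hae0 : ∀ᵐ y ∂(volume : Measure ℝ),
      y ∈ Ioc (0:ℝ) y₀ → pC ηV ηS α μ ρ x y = c₁ * Real.exp (k * y) := by
    have hsub : {y : ℝ | ¬ (y ∈ Ioc (0:ℝ) y₀ → pC ηV ηS α μ ρ x y = c₁ * Real.exp (k * y))}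
        ⊆ {y₀} := by
      intro y hy
      by_contra hne'
      exact hy fun hmem => heq1 y ⟨hmem.1, lt_of_le_of_ne hmem.2 hne'⟩
    exact measure_mono_null hsub (measure_singleton y₀)
  have hae : ∀ᵐ y ∂(volume.restrict (Ioc (0:ℝ) y₀)),
      pC ηV ηS α μ ρ x y = c₁ * Real.exp (k * y) :=
    (ae_restrict_iff' measurableSet_Ioc).2 hae0
  have hint1 : IntegrableOn (pC ηV ηS α μ ρ x) (Ioc 0 y₀) := by
    have hcont : Continuous fun y : ℝ => c₁ * Real.exp (k * y) := by fun_prop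
    exact hcont.integrableOn_Ioc.congr (hae.mono fun y h => h.symm)
  have hint2 : IntegrableOn (pC ηV ηS α μ ρ x) (Ioi y₀) := by
    have hmodel : IntegrableOn (fun y => c₂ * Real.exp (-(b * y))) (Ioi y₀) := by
      have := (exp_neg_integrableOn_Ioi y₀ hb0).const_mul c₂
      simp only [neg_mul] at this
      exact this
    exact hmodel.congr_fun (fun y hy => (heq2 y hy).symm) measurableSet_Ioi
  have hsplit : ∫ y in Ioi (0:ℝ), pC ηV ηS α μ ρ x y
      = (∫ y in Ioc (0:ℝ) y₀, pC ηV ηS α μ ρ x y) + ∫ y in Ioi y₀, pC ηV ηS α μ ρ x y := by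
    rw [← setIntegral_union (Set.Ioc_disjoint_Ioi le_rfl) measurableSet_Ioi hint1 hint2,
      Set.Ioc_union_Ioi_eq_Ioi hy₀0.le]
  rw [hsplit]
  have hI1 : ∫ y in Ioc (0:ℝ) y₀, pC ηV ηS α μ ρ x y
      = c₁ * ((Real.exp (k * y₀) - 1) / k) := by
    rw [setIntegral_congr_ae measurableSet_Ioc hae0,
      ← intervalIntegral.integral_of_le hy₀0.le, intervalIntegral.integral_const_mul,
      exp_ivl' 0 y₀ hk]
    simp
  have hI2 : ∫ y in Ioi y₀, pC ηV ηS α μ ρ x y = c₂ * (Real.exp (-(b * y₀)) / b) := by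
    rw [setIntegral_congr_fun measurableSet_Ioi heq2, integral_const_mul, exp_Ioi' y₀ hb0]
  rw [hI1, hI2]
  have hrne : r ≠ 0 := hr0.ne'
  have hky : k * y₀ = (ηS * μ + ηV / r * x) - (ηS * x + ηV / r * μ) := by
    rw [hkdef, hy₀]; field_simp; ring
  have hby : -(b * y₀) = (ηV / r * x + ηS * x) - (ηV / r * μ + ηS * μ) := by
    rw [hbdef, hy₀]; field_simp; ring
  rw [hky, hby, hc₁, hc₂,
    show ηS * (x - μ) = ηS * x - ηS * μ by ring,
    show -(ηS * x - ηS * μ) = ηS * μ - ηS * x by ring,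
    show -(ηV / r) * μ = -(ηV / r * μ) by ring,
    show -ηS * μ = -(ηS * μ) by ring]
  rw [Real.exp_sub, Real.exp_sub, Real.exp_sub, Real.exp_sub, Real.exp_add, Real.exp_add,
    Real.exp_add, Real.exp_add, Real.exp_neg, Real.exp_neg]
  have h1 : Real.exp (ηS * μ) ≠ 0 := Real.exp_ne_zero _
  have h2 : Real.exp (ηV / r * μ) ≠ 0 := Real.exp_ne_zero _
  have hbne : b ≠ 0 := hb0.ne'
  have hkne : ηV - ηS * r ≠ 0 := fun h => hne (by linarith [sub_eq_zero.1 h])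
  field_simp
  ring
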